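/- arXiv:2103.10800 — 5 statements merged into one kernel-verified Lean document; each statement's English description precedes it below -/
import Mathlib

section
/- There is, up to scalar multiple, a unique 2×2 matrix A over ℂ(q^{1/2}) that commutes with T_q = [[q,1],[0,1]] up to a scalar and whose associated Möbius transformation sends -i·q^{-1/2} to i·q^{-1/2}; it is A = [[1 + i(q^{1/2} - q^{-1/2}), 2i·q^{-1/2}], [0, 1 - i(q^{1/2} - q^{-1/2})]]. -/
set_option synthInstance.maxHeartbeats 1000000
set_option maxHeartbeats 1000000

noncomputable section

/-- The imaginary unit as a constant of `ℂ(t)`, `t = q^{1/2}`. -/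
def ci : RatFunc ℂ := RatFunc.C Complex.I

/-- `t = q^{1/2}`, the generator of `ℂ(t)`. -/
def tt : RatFunc ℂ := RatFunc.X

/-- `T_q = [[q,1],[0,1]]` with `q = t²`. -/
def Tq : Matrix (Fin 2) (Fin 2) (RatFunc ℂ) := !![tt ^ 2, 1; 0, 1]

/-- The matrix `(U²)_q`. -/
def U2q : Matrix (Fin 2) (Fin 2) (RatFunc ℂ) :=
  !![1 + ci * (tt - tt⁻¹), 2 * ci * tt⁻¹; 0, 1 - ci * (tt - tt⁻¹)]

lemma htt : tt ≠ 0 := RatFunc.X_ne_zero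

lemma hci : ci * ci = -1 := by
  rw [ci, ← map_mul, Complex.I_mul_I, map_neg, map_one]

lemma poly_ne {p : Polynomial ℂ} (hp : p ≠ 0) :
    algebraMap (Polynomial ℂ) (RatFunc ℂ) p ≠ 0 := RatFunc.algebraMap_ne_zero hp

lemma hq1 : tt ^ 2 - 1 ≠ 0 := by
  have h : tt ^ 2 - 1 = algebraMap (Polynomial ℂ) (RatFunc ℂ) (Polynomial.X ^ 2 - 1) := by
    simp [tt, RatFunc.algebraMap_X]
  rw [h]
  apply poly_ne
  intro h
  have := congrArg (Polynomial.eval 0) h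
  simp at this

lemma hq3 : tt ^ 2 + 1 ≠ 0 := by
  have h : tt ^ 2 + 1 = algebraMap (Polynomial ℂ) (RatFunc ℂ) (Polynomial.X ^ 2 + 1) := by
    simp [tt, RatFunc.algebraMap_X]
  rw [h]
  apply poly_ne
  intro h
  have := congrArg (Polynomial.eval 0) h
  simp at this

lemma hq2 : tt ^ 4 - tt ^ 2 + 1 ≠ 0 := by
  have h : tt ^ 4 - tt ^ 2 + 1
      = algebraMap (Polynomial ℂ) (RatFunc ℂ) (Polynomial.X ^ 4 - Polynomial.X ^ 2 + 1) := by
    simp [tt, RatFunc.algebraMap_X]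
  rw [h]
  apply poly_ne
  intro h
  have := congrArg (Polynomial.eval 0) h
  simp at this

lemma hden1 : 1 - ci * (tt - tt⁻¹) ≠ 0 := by
  have key : (1 - ci * (tt - tt⁻¹)) * tt = tt - ci * (tt ^ 2 - 1) := by
    have h1 : tt⁻¹ * tt = 1 := inv_mul_cancel₀ htt
    linear_combination ci * h1
  have hrhs : tt - ci * (tt ^ 2 - 1) ≠ 0 := by
    have h : tt - ci * (tt ^ 2 - 1)
        = algebraMap (Polynomial ℂ) (RatFunc ℂ)
            (Polynomial.X - Polynomial.C Complex.I * (Polynomial.X ^ 2 - 1)) := by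
      simp [tt, ci, RatFunc.algebraMap_X, RatFunc.algebraMap_C]
    rw [h]
    apply poly_ne
    intro h
    have := congrArg (Polynomial.eval 0) h
    simp [Complex.I_ne_zero] at this
  intro h
  rw [h, zero_mul] at key
  exact hrhs key.symm

/-- There is, up to a nonzero scalar, a unique matrix `A` over `ℂ(q^{1/2})` that commutes
with `T_q` up to a scalar and whose Möbius transformation sends `[-i]_q = -i q^{-1/2}` to
`[i]_q = i q^{-1/2}`: the matrix `(U²)_q`. -/
theorem U2q_unique (A : Matrix (Fin 2) (Fin 2) (RatFunc ℂ)) (hA : A ≠ 0) :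
    ((∃ lam : RatFunc ℂ, lam ≠ 0 ∧ Tq * A = lam • (A * Tq)) ∧
        A 1 0 * (-(ci * tt⁻¹)) + A 1 1 ≠ 0 ∧
        A 0 0 * (-(ci * tt⁻¹)) + A 0 1 =
          (ci * tt⁻¹) * (A 1 0 * (-(ci * tt⁻¹)) + A 1 1)) ↔
      ∃ c : RatFunc ℂ, c ≠ 0 ∧ A = c • U2q := by
  have hinv : tt * tt⁻¹ = 1 := mul_inv_cancel₀ htt
  constructor
  · rintro ⟨⟨lam, hlam, hM⟩, hden, hmob⟩
    have e00 := congrFun (congrFun hM 0) 0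
    have e01 := congrFun (congrFun hM 0) 1
    have e10 := congrFun (congrFun hM 1) 0
    have e11 := congrFun (congrFun hM 1) 1
    simp [Tq, Matrix.mul_apply, Fin.sum_univ_two] at e00 e01 e10 e11
    set a := A 0 0 with ha'
    set b := A 0 1 with hb'
    set e := A 1 0 with he'
    set d := A 1 1 with hd'
    have hP : tt - ci * (tt ^ 2 - 1) ≠ 0 := by
      have h : tt - ci * (tt ^ 2 - 1)
          = algebraMap (Polynomial ℂ) (RatFunc ℂ)
              (Polynomial.X - Polynomial.C Complex.I * (Polynomial.X ^ 2 - 1)) := by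
        simp [tt, ci, RatFunc.algebraMap_X, RatFunc.algebraMap_C]
      rw [h]
      apply poly_ne
      intro h
      have := congrArg (Polynomial.eval 0) h
      simp [Complex.I_ne_zero] at this
    have hm : b * tt ^ 2 - ci * a * tt = e + ci * d * tt := by
      have h : (a * -(ci * tt⁻¹) + b) * tt ^ 2
          = (ci * tt⁻¹ * (e * -(ci * tt⁻¹) + d)) * tt ^ 2 := by rw [hmob]
      linear_combination h + (ci * a * tt + ci * d * tt - e * ci * ci * (tt * tt⁻¹ + 1)) * hinv
        + (-e) * hci
    have he0 : e = 0 := by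
      by_contra hne
      have hlq : lam * tt ^ 2 = 1 := by
        have h2 : (lam * tt ^ 2) * e = 1 * e := by rw [one_mul]; linear_combination -e10
        exact mul_right_cancel₀ hne h2
      have hae : e = a * (1 - tt ^ 2) := by linear_combination e00 + a * hlq
      have hde : e = d * (tt ^ 2 - 1) := by linear_combination -tt ^ 2 * e11 - (e + d) * hlq
      have had : a + d = 0 := by
        have h3 : (tt ^ 2 - 1) * (a + d) = 0 := by linear_combination hae - hde
        rcases mul_eq_zero.mp h3 with h | h
        · exact absurd h hq1
        · exact h
      have hb2 : b * (tt ^ 2 - 1) = a := by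
        have h4 : (tt ^ 2 + 1) * (b * (tt ^ 2 - 1) - a) = 0 := by
          linear_combination tt ^ 2 * e01 + (a + b) * hlq - tt ^ 2 * had
        rcases mul_eq_zero.mp h4 with h | h
        · exact absurd h hq3
        · linear_combination h
      have hfin : a * (tt ^ 4 - tt ^ 2 + 1) = 0 := by
        linear_combination (tt ^ 2 - 1) * hm + ci * tt * (tt ^ 2 - 1) * had
          + (tt ^ 2 - 1) * hae - tt ^ 2 * hb2
      have ha0 : a = 0 := by
        rcases mul_eq_zero.mp hfin with h | h
        · exact h
        · exact absurd h hq2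
      apply hne
      rw [ha0] at hae
      simpa using hae
    have hd0 : d ≠ 0 := by
      intro h0
      apply hden
      rw [he0, h0]
      ring
    have hlam1 : lam = 1 := by
      have h2 : lam * d = 1 * d := by
        rw [one_mul]; linear_combination -e11 - lam * he0
      exact mul_right_cancel₀ hd0 h2
    refine ⟨d / (1 - ci * (tt - tt⁻¹)), div_ne_zero hd0 hden1, ?_⟩
    set c := d / (1 - ci * (tt - tt⁻¹)) with hc'
    have hcd : c * (1 - ci * (tt - tt⁻¹)) = d := div_mul_cancel₀ d hden1
    have hcd' : c * (tt - ci * (tt ^ 2 - 1)) = d * tt := by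
      linear_combination tt * hcd - c * ci * hinv
    have hm' : b * tt ^ 2 - ci * a * tt = ci * d * tt := by
      rw [he0] at hm
      linear_combination hm
    have e01' : tt ^ 2 * b + d = a + b := by
      rw [hlam1, one_mul] at e01
      exact e01
    have hkey' : tt * (a * (tt - ci * (tt ^ 2 - 1)) - d * (tt + ci * (tt ^ 2 - 1))) = 0 := by
      linear_combination (tt ^ 2 - 1) * hm' - tt ^ 2 * e01'
    have hkey : a * (tt - ci * (tt ^ 2 - 1)) = d * (tt + ci * (tt ^ 2 - 1)) := by
      rcases mul_eq_zero.mp hkey' with h | h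
      · exact absurd h htt
      · linear_combination h
    ext i j
    fin_cases i <;> fin_cases j <;> simp [U2q]
    · -- a = c * (1 + ci * (tt - tt⁻¹))
      have h00 : a * (tt - ci * (tt ^ 2 - 1))
          = (c * (1 + ci * (tt - tt⁻¹))) * (tt - ci * (tt ^ 2 - 1)) := by
        linear_combination hkey - (1 + ci * (tt - tt⁻¹)) * hcd' + d * ci * hinv
      exact mul_right_cancel₀ hP h00
    · -- b = c * (2 * ci * tt⁻¹)
      have hb3 : b * tt = 2 * ci * c := by
        have h01 : (b * tt) * (tt * (tt - ci * (tt ^ 2 - 1)))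
            = (2 * ci * c) * (tt * (tt - ci * (tt ^ 2 - 1))) := by
          linear_combination (tt - ci * (tt ^ 2 - 1)) * hm' + ci * tt * hkey
            - 2 * ci * tt * hcd'
        exact mul_right_cancel₀ (mul_ne_zero htt hP) h01
      field_simp [show tt ≠ 0 from RatFunc.X_ne_zero]
      linear_combination hb3
    · -- e = 0
      exact he0
    · -- d = c * (1 - ci * (tt - tt⁻¹))
      exact hcd.symm
  · rintro ⟨c, hc, rfl⟩
    refine ⟨⟨1, one_ne_zero, ?_⟩, ?_, ?_⟩
    · rw [one_smul, Matrix.mul_smul, Matrix.smul_mul]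
      congr 1
      ext i j
      fin_cases i <;> fin_cases j <;>
          simp [Tq, U2q, Matrix.mul_apply, Fin.sum_univ_two]
      all_goals
        field_simp [show tt ≠ 0 from RatFunc.X_ne_zero]
        try ring
    · simp only [Matrix.smul_apply, U2q, smul_eq_mul]
      norm_num
      exact ⟨hc, hden1⟩
    · simp only [Matrix.smul_apply, U2q, smul_eq_mul]
      norm_num
      ring

end
end

section
/- Define the operator U_q on functions of q by U_q(X)(q) = (X(q^{-1}) + i q^{1/2}) / ((1-q)·X(q^{-1}) + q). Then U_q commutes with the operator T_q(X)(q) = q·X(q) + 1, i.e. U_q(T_q X) = T_q(U_q X) as functions of q. -/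
/-- In a field `K` of "functions of q" with an involution `σ` realizing `q ↦ q⁻¹`
(where `t = q^{1/2}`, `σ t = t⁻¹`, `i` the imaginary unit is fixed), the operator
`U_q(X) = (σX + i t)/((1 - t²) σX + t²)` commutes with `T_q(X) = t² X + 1`. -/
theorem Uq_commutes_with_Tq (K : Type*) [Field K] (σ : K ≃+* K) (i t : K)
    (ht : t ≠ 0) (hi : i ^ 2 = -1) (hσt : σ t = t⁻¹) (hσi : σ i = i)
    (hσσ : ∀ x : K, σ (σ x) = x)
    (X : K) (hD : (1 - t ^ 2) * σ X + t ^ 2 ≠ 0) :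
    (σ (t ^ 2 * X + 1) + i * t) / ((1 - t ^ 2) * σ (t ^ 2 * X + 1) + t ^ 2) =
      t ^ 2 * ((σ X + i * t) / ((1 - t ^ 2) * σ X + t ^ 2)) + 1 := by
  have hs : σ (t ^ 2 * X + 1) = t⁻¹ ^ 2 * σ X + 1 := by
    rw [map_add, map_mul, map_pow, hσt, map_one]
  rw [hs]
  have ht2 : t ^ 2 ≠ 0 := pow_ne_zero 2 ht
  have hD2 : (1 - t ^ 2) * (t⁻¹ ^ 2 * σ X + 1) + t ^ 2 ≠ 0 := by
    intro h
    apply hD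
    have := congrArg (· * t ^ 2) h
    simp only [zero_mul] at this
    rw [← this]
    field_simp
    ring
  have key : (t⁻¹ ^ 2 * σ X + 1 + i * t) / ((1 - t ^ 2) * (t⁻¹ ^ 2 * σ X + 1) + t ^ 2)
      = (σ X + t ^ 2 + i * t ^ 3) / ((1 - t ^ 2) * σ X + t ^ 2) := by
    rw [div_eq_div_iff hD2 hD]
    field_simp
    ring
  rw [key, mul_div_assoc' , div_add' _ _ _ hD, div_eq_div_iff hD hD]
  ring
end

section
/- Define a sequence (a_n)_{n ∈ ℤ} in ℂ(q^{1/2}) by a_0 = 0, a_1 = i q^{-1/2}, a_{-1} = -i q^{-1/2}, a_2 = (Q+1)·i q^{-1/2}, and the recurrence a_{n+2} = (Q+1)·a_n - Q·a_{n-2}, where Q = (2i q^{1/2}(q-1) - (q²-3q+1))/(q²-q+1). Then for all n ∈ ℤ: a_{2n} = [2]_Q [n]_Q · i q^{-1/2} and a_{2n-1} = ([2]_Q [n]_Q - Q^n) · i q^{-1/2}, where [n]_Q = (1-Q^n)/(1-Q). -/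
noncomputable def qf (Q w c : ℂ) (n : ℤ) : ℂ :=
  ((1 + Q) * ((1 - Q ^ n) / (1 - Q)) - c * Q ^ n) * w

lemma qf_rec (Q w c : ℂ) (hQ0 : Q ≠ 0) (hQ1 : Q ≠ 1) (n : ℤ) :
    qf Q w c (n + 1) = (Q + 1) * qf Q w c n - Q * qf Q w c (n - 1) := by
  have h1Q : (1 : ℂ) - Q ≠ 0 := sub_ne_zero.mpr (Ne.symm hQ1)
  have e1 : Q ^ (n + 1) = Q ^ n * Q := by rw [zpow_add₀ hQ0, zpow_one]
  have e2 : Q ^ (n - 1) = Q ^ n / Q := by rw [zpow_sub₀ hQ0, zpow_one]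
  simp only [qf, e1, e2]
  field_simp
  ring

open Polynomial in
lemma trans_facts (t : ℂ) (htr : Transcendental ℚ t) (Q : ℂ)
    (hQ : Q = (2 * Complex.I * t * (t ^ 2 - 1) - ((t ^ 2) ^ 2 - 3 * t ^ 2 + 1)) /
      ((t ^ 2) ^ 2 - t ^ 2 + 1)) : Q ≠ 0 ∧ Q ≠ 1 := by
  have halg : ∀ p : ℚ[X], aeval t p = 0 → p = 0 := transcendental_iff.mp htr
  have hden : ((t ^ 2) ^ 2 - t ^ 2 + 1 : ℂ) ≠ 0 := by
    intro h
    have h2 : aeval t ((X : ℚ[X]) ^ 4 - X ^ 2 + 1) = 0 := by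
      simp only [map_add, map_sub, map_pow, map_one, aeval_X]
      linear_combination h
    have := congrArg (Polynomial.eval 0) (halg _ h2)
    simp at this
  constructor
  · intro h0
    have hnum : 2 * Complex.I * t * (t ^ 2 - 1) - ((t ^ 2) ^ 2 - 3 * t ^ 2 + 1) = 0 := by
      rw [h0] at hQ
      exact (div_eq_zero_iff.mp hQ.symm).resolve_right hden
    have hu : (t ^ 2) ^ 2 - 3 * t ^ 2 + 1 = 2 * Complex.I * (t ^ 3 - t) := by
      linear_combination -hnum
    have key : ((t ^ 2) ^ 2 - 3 * t ^ 2 + 1) ^ 2 + 4 * (t ^ 3 - t) ^ 2 = 0 := by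
      rw [hu]; linear_combination 4 * (t ^ 3 - t) ^ 2 * Complex.I_sq
    have h2 : aeval t (((X : ℚ[X]) ^ 4 - 3 * X ^ 2 + 1) ^ 2 + 4 * (X ^ 3 - X) ^ 2) = 0 := by
      simp only [map_add, map_sub, map_pow, map_one, map_mul, map_ofNat, aeval_X]
      linear_combination key
    have := congrArg (Polynomial.eval 0) (halg _ h2)
    simp at this
  · intro h1
    rw [h1] at hQ
    rw [eq_div_iff hden, one_mul] at hQ
    have hu : Complex.I * (t ^ 3 - t) = (t ^ 2) ^ 2 - 2 * t ^ 2 + 1 := by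
      linear_combination (-1 / 2 : ℂ) * hQ
    have key : ((t ^ 2) ^ 2 - 2 * t ^ 2 + 1) ^ 2 + (t ^ 3 - t) ^ 2 = 0 := by
      rw [← hu]; linear_combination (t ^ 3 - t) ^ 2 * Complex.I_sq
    have h2 : aeval t (((X : ℚ[X]) ^ 4 - 2 * X ^ 2 + 1) ^ 2 + (X ^ 3 - X) ^ 2) = 0 := by
      simp only [map_add, map_sub, map_pow, map_one, map_mul, map_ofNat, aeval_X]
      linear_combination key
    have := congrArg (Polynomial.eval 0) (halg _ h2)
    simp at this

/-- Closed formula for q-deformed Gaussian integers: with `t = q^{1/2}` transcendental,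
`Q = (2 i q^{1/2}(q-1) - (q²-3q+1))/(q²-q+1)`, and `a : ℤ → ℂ`, `a n = [n i]_q`,
defined by `a 0 = 0`, `a (±1) = ± i q^{-1/2}`, `a 2 = (Q+1) i q^{-1/2}` and the
recurrence `a (n+2) = (Q+1) a n - Q a (n-2)`, one has, for every `n : ℤ`,
`[2n i]_q = [2]_Q [n]_Q [i]_q` and `[(2n-1) i]_q = ([2]_Q [n]_Q - Qⁿ) [i]_q`,
where `[m]_Q = (1 - Q^m)/(1 - Q)` and `[i]_q = i q^{-1/2}`. -/
theorem qGaussian_closed_form (t : ℂ) (htr : Transcendental ℚ t) (Q : ℂ)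
    (hQ : Q = (2 * Complex.I * t * (t ^ 2 - 1) - ((t ^ 2) ^ 2 - 3 * t ^ 2 + 1)) /
      ((t ^ 2) ^ 2 - t ^ 2 + 1))
    (a : ℤ → ℂ) (ha0 : a 0 = 0) (ha1 : a 1 = Complex.I * t⁻¹)
    (ham1 : a (-1) = -(Complex.I * t⁻¹))
    (ha2 : a 2 = (Q + 1) * (Complex.I * t⁻¹))
    (harec : ∀ n : ℤ, a (n + 2) = (Q + 1) * a n - Q * a (n - 2)) :
    ∀ n : ℤ,
      a (2 * n) =
        ((1 - Q ^ (2 : ℤ)) / (1 - Q)) * ((1 - Q ^ n) / (1 - Q)) * (Complex.I * t⁻¹) ∧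
      a (2 * n - 1) =
        (((1 - Q ^ (2 : ℤ)) / (1 - Q)) * ((1 - Q ^ n) / (1 - Q)) - Q ^ n) *
          (Complex.I * t⁻¹) := by
  obtain ⟨hQ0, hQ1⟩ := trans_facts t htr Q hQ
  have h1Q : (1 : ℂ) - Q ≠ 0 := sub_ne_zero.mpr (Ne.symm hQ1)
  set w : ℂ := Complex.I * t⁻¹ with hw
  have hc2 : (1 - Q ^ (2 : ℤ)) / (1 - Q) = 1 + Q := by
    rw [show ((2 : ℤ)) = ((2 : ℕ) : ℤ) from rfl, zpow_natCast]
    field_simp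
    ring
  set P : ℤ → Prop := fun m => a (2 * m) = qf Q w 0 m ∧ a (2 * m - 1) = qf Q w 1 m with hP
  have step : ∀ m : ℤ, P m → P (m + 1) → P (m + 2) := by
    intro m h1 h2
    constructor
    · have h := harec (2 * m + 2)
      rw [show 2 * m + 2 + 2 = 2 * (m + 2) by ring, show 2 * m + 2 = 2 * (m + 1) by ring,
        show 2 * (m + 1) - 2 = 2 * m by ring] at h
      rw [h, h1.1, h2.1]
      have k := qf_rec Q w 0 hQ0 hQ1 (m + 1)
      rw [show m + 1 + 1 = m + 2 by ring, show m + 1 - 1 = m by ring] at k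
      linear_combination -k
    · have h := harec (2 * m + 1)
      rw [show 2 * m + 1 + 2 = 2 * (m + 2) - 1 by ring, show 2 * m + 1 = 2 * (m + 1) - 1 by ring,
        show 2 * (m + 1) - 1 - 2 = 2 * m - 1 by ring] at h
      rw [h, h1.2, h2.2]
      have k := qf_rec Q w 1 hQ0 hQ1 (m + 1)
      rw [show m + 1 + 1 = m + 2 by ring, show m + 1 - 1 = m by ring] at k
      linear_combination -k
  have back : ∀ m : ℤ, P m → P (m + 1) → P (m - 1) := by
    intro m h1 h2
    constructor
    · have h := harec (2 * m)
      rw [show 2 * m + 2 = 2 * (m + 1) by ring, show 2 * m - 2 = 2 * (m - 1) by ring,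
        h1.1, h2.1, qf_rec Q w 0 hQ0 hQ1] at h
      have h3 : Q * a (2 * (m - 1)) = Q * qf Q w 0 (m - 1) := by linear_combination h
      exact mul_left_cancel₀ hQ0 h3
    · have h := harec (2 * m - 1)
      rw [show 2 * m - 1 + 2 = 2 * (m + 1) - 1 by ring,
        show 2 * m - 1 - 2 = 2 * (m - 1) - 1 by ring, h1.2, h2.2, qf_rec Q w 1 hQ0 hQ1] at h
      have h3 : Q * a (2 * (m - 1) - 1) = Q * qf Q w 1 (m - 1) := by linear_combination h
      exact mul_left_cancel₀ hQ0 h3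
  have H : ∀ m : ℤ, P m ∧ P (m + 1) := by
    intro m
    induction m using Int.induction_on with
    | zero =>
      constructor
      · constructor
        · rw [show (2 * (0 : ℤ)) = 0 from rfl, ha0]
          simp [qf]
        · rw [show (2 * (0 : ℤ) - 1) = -1 from rfl, ham1]
          simp [qf]
      · constructor
        · rw [show (2 * ((0 : ℤ) + 1)) = 2 from rfl, ha2]
          simp only [qf, zero_add, zpow_one, zero_mul, sub_zero, div_self h1Q]
          ring
        · rw [show (2 * ((0 : ℤ) + 1) - 1) = 1 from rfl, ha1]
          simp only [qf, zero_add, zpow_one, one_mul, div_self h1Q]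
          ring
    | succ i ih =>
      refine ⟨ih.2, ?_⟩
      have := step i ih.1 ih.2
      rwa [show (i : ℤ) + 2 = (i + 1) + 1 by ring] at this
    | pred i ih =>
      refine ⟨?_, ?_⟩
      · have := back (-(i : ℤ)) ih.1 ih.2
        rwa [show -(i : ℤ) - 1 = -i - 1 by ring] at this
      · have : (-(i : ℤ) - 1) + 1 = -i := by ring
        rw [this]
        exact ih.1
  intro n
  obtain ⟨he, ho⟩ := (H n).1
  constructor
  · rw [he, hc2]; simp only [qf]; ring
  · rw [ho, hc2]; simp only [qf]; ring
end

section
/- Define modified Chebyshev polynomials Ũ^I_n(x) by Ũ^I_0 = 1, Ũ^I_1 = 2x and Ũ^I_{n+1} = 2x·Ũ^I_n − Ũ^I_{n−1} for n odd, Ũ^I_{n+1} = 2·Ũ^I_n − Ũ^I_{n−1} for n even. Define ℐ_n(z) := Im([ni]_q)·(i q^{-1/2})^{-1} where z = q/(q²−q+1) and [ni]_q is given by the closed formulas [2ni]_q = [2]_Q[n]_Q [i]_q, [(2n−1)i]_q = ([2]_Q[n]_Q − Q^n)[i]_q. Then ℐ_{n+1}(z) = Ũ^I_n(z) for all n ≥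 0. -/
set_option maxHeartbeats 1000000 in
/-- The imaginary parts of the q-deformed Gaussian integers are the modified Chebyshev
polynomials `Ũ^I_n`: with `q ∈ (0,1)`, `z = q/(q²-q+1)`,
`ℐ_n := Im([n i]_q) · √q` and `[n i]_q` given by the closed formulas
`[2n i]_q = [2]_Q [n]_Q [i]_q`, `[(2n-1) i]_q = ([2]_Q [n]_Q - Qⁿ)[i]_q`, and `Ũ^I`
defined by `Ũ^I_0 = 1`, `Ũ^I_1 = 2x`, `Ũ^I_{n+1} = 2x Ũ^I_n - Ũ^I_{n-1}` when the
factor `2x` occurs at even `n` and `Ũ^I_{n+1} = 2 Ũ^I_n - Ũ^I_{n-1}` at odd `n`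
(so that `Ũ^I_2 = 4x - 1`, `Ũ^I_3 = 8x² - 4x`, …), one has `ℐ_{n+1}(z) = Ũ^I_n(z)`
for all `n ≥ 0`. -/
theorem im_qGaussian_eq_chebyshev (q : ℝ) (hq0 : 0 < q) (hq1 : q < 1) (Q : ℂ)
    (hQ : Q = (2 * Complex.I * (Real.sqrt q : ℂ) * ((q : ℂ) - 1) -
        ((q : ℂ) ^ 2 - 3 * (q : ℂ) + 1)) / ((q : ℂ) ^ 2 - (q : ℂ) + 1))
    (a : ℤ → ℂ)
    (haeven : ∀ n : ℤ, a (2 * n) =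
      ((1 - Q ^ (2 : ℤ)) / (1 - Q)) * ((1 - Q ^ n) / (1 - Q)) *
        (Complex.I * ((Real.sqrt q : ℂ))⁻¹))
    (haodd : ∀ n : ℤ, a (2 * n - 1) =
      (((1 - Q ^ (2 : ℤ)) / (1 - Q)) * ((1 - Q ^ n) / (1 - Q)) - Q ^ n) *
        (Complex.I * ((Real.sqrt q : ℂ))⁻¹))
    (U : ℕ → ℝ → ℝ)
    (hU0 : ∀ x, U 0 x = 1) (hU1 : ∀ x, U 1 x = 2 * x)
    (hUeven : ∀ n : ℕ, 1 ≤ n → Even n → ∀ x, U (n + 1) x = 2 * x * U n x - U (n - 1) x)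
    (hUodd : ∀ n : ℕ, 1 ≤ n → Odd n → ∀ x, U (n + 1) x = 2 * U n x - U (n - 1) x) :
    ∀ n : ℕ, (a ((n : ℤ) + 1)).im * Real.sqrt q = U n (q / (q ^ 2 - q + 1)) := by
  set s : ℝ := Real.sqrt q with hsdef
  set z : ℝ := q / (q ^ 2 - q + 1) with hzdef
  have hs0 : 0 < s := Real.sqrt_pos.2 hq0
  have hsq : (s:ℂ)^2 = (q:ℂ) := by
    norm_cast
    exact Real.sq_sqrt hq0.le
  have hDr : (0:ℝ) < q^2 - q + 1 := by nlinarith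
  have hD : ((q:ℂ)^2 - (q:ℂ) + 1) ≠ 0 := by
    have : ((q^2 - q + 1 : ℝ) : ℂ) ≠ 0 := Complex.ofReal_ne_zero.2 hDr.ne'
    push_cast at this
    convert this using 2
  have hD' : (q:ℂ)*((q:ℂ)-1)+1 ≠ 0 := by convert hD using 1; ring
  have hmul : Q * (starRingEnd ℂ) Q = 1 := by
    rw [hQ]
    simp only [map_div₀, map_sub, map_add, map_mul, map_pow, map_one, map_ofNat,
      Complex.conj_I, Complex.conj_ofReal]
    field_simp
    ring_nf
    linear_combination (-4*((s:ℝ):ℂ)^2*((q:ℂ)-1)^2) * Complex.I_sq + (4*((q:ℂ)-1)^2) * hsq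
  have hQ0 : Q ≠ 0 := by
    intro h
    rw [h, zero_mul] at hmul
    exact zero_ne_one hmul
  have hconj : (starRingEnd ℂ) Q = Q⁻¹ := (inv_eq_of_mul_eq_one_right hmul).symm
  have hQ1 : Q ≠ 1 := by
    intro h
    have h2 : (2 * Complex.I * (s : ℂ) * ((q : ℂ) - 1) -
        ((q : ℂ) ^ 2 - 3 * (q : ℂ) + 1)) = ((q : ℂ) ^ 2 - (q : ℂ) + 1) := by
      have h' := hQ
      rw [h] at h'
      field_simp at h'
      linear_combination -h'
    have h3 := congrArg Complex.im h2
    simp [Complex.mul_im, Complex.mul_re, ← Complex.ofReal_pow] at h3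
    rcases h3 with h3 | h3 <;> linarith
  have h1Q : (1:ℂ) - Q ≠ 0 := sub_ne_zero.2 (Ne.symm hQ1)
  have hzc : Q + Q⁻¹ = 4*(z:ℂ) - 2 := by
    rw [← hconj, hQ]
    simp only [map_div₀, map_sub, map_add, map_mul, map_pow, map_one, map_ofNat,
      Complex.conj_I, Complex.conj_ofReal]
    rw [hzdef]
    push_cast
    field_simp
    ring
  have hzQ : (z : ℂ) = (Q + Q⁻¹ + 2)/4 := by rw [hzc]; ring
  have hQ2 : Q ^ (2:ℤ) = Q * Q := by
    rw [show (2:ℤ) = ((2:ℕ):ℤ) by norm_num, zpow_natCast, sq]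
  -- Im helper
  have him : ∀ w : ℂ, (w * (Complex.I * ((s:ℝ):ℂ)⁻¹)).im * s = w.re := by
    intro w
    rw [← Complex.ofReal_inv]
    simp [Complex.mul_im, Complex.mul_re]
    field_simp
  -- Lemma A
  have lemA : ∀ m : ℤ, a (2*m+1) = 2 * a (2*m) - a (2*m-1) := by
    intro m
    have e1 : (2*m+1 : ℤ) = 2*(m+1)-1 := by ring
    rw [e1, haodd (m+1), haeven m, haodd m]
    have hzp : Q^(m+1) = Q^m * Q := zpow_add_one₀ hQ0 m
    rw [hzp, hQ2]
    field_simp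
    ring
  -- Lemma B
  have lemB : ∀ m : ℤ, (a (2*m+2)).im * s =
      2*z*((a (2*m+1)).im * s) - (a (2*m)).im * s := by
    intro m
    have e1 : (2*m+2 : ℤ) = 2*(m+1) := by ring
    have e2 : (2*m+1 : ℤ) = 2*(m+1)-1 := by ring
    rw [e1, e2, haeven (m+1), haodd (m+1), haeven m]
    have hzp : Q^(m+1) = Q^m * Q := zpow_add_one₀ hQ0 m
    rw [hzp, hQ2, him, him, him]
    set P : ℂ := Q^m with hPdef
    have hPne : P ≠ 0 := zpow_ne_zero _ hQ0
    have hPc : (starRingEnd ℂ) P = P⁻¹ := by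
      rw [hPdef, map_zpow₀, hconj, ← inv_zpow]
    set w₁ : ℂ := ((1 - Q*Q) / (1 - Q)) * ((1 - P*Q) / (1 - Q)) with hw1
    set w₂ : ℂ := ((1 - Q*Q) / (1 - Q)) * ((1 - P*Q) / (1 - Q)) - P*Q with hw2
    set w₃ : ℂ := ((1 - Q*Q) / (1 - Q)) * ((1 - P) / (1 - Q)) with hw3
    set v : ℂ := w₁ - 2*(z:ℂ)*w₂ + w₃ with hvdef
    set N : ℂ := (1+Q)*(1-P*Q) - 2*(z:ℂ)*(1+Q-2*P*Q) + (1+Q)*(1-P) with hNdef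
    have claim1 : v = N/(1-Q) := by
      rw [hvdef, hNdef, hw1, hw2, hw3]
      field_simp
      ring
    have claim2 : N*(1-Q⁻¹) + ((1+Q⁻¹)*(1-P⁻¹*Q⁻¹) - 2*(z:ℂ)*(1+Q⁻¹-2*P⁻¹*Q⁻¹)
        + (1+Q⁻¹)*(1-P⁻¹))*(1-Q) = 0 := by
      rw [hNdef, hzQ]
      field_simp
      ring_nf
    have hconjE : (starRingEnd ℂ) (N*(1-Q⁻¹)) = ((1+Q⁻¹)*(1-P⁻¹*Q⁻¹)
        - 2*(z:ℂ)*(1+Q⁻¹-2*P⁻¹*Q⁻¹) + (1+Q⁻¹)*(1-P⁻¹))*(1-Q) := by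
      rw [hNdef]
      simp only [map_mul, map_add, map_sub, map_one, map_ofNat, map_inv₀,
        Complex.conj_ofReal, hconj, hPc, inv_inv]
    have hre : (N*(1-Q⁻¹)).re = 0 := by
      have h := claim2
      rw [← hconjE, Complex.add_conj] at h
      have h2 := congrArg Complex.re h
      push_cast at h2
      simpa using h2
    have hr : (1-Q)*(1-Q⁻¹) = ((Complex.normSq (1-Q) : ℝ) : ℂ) := by
      rw [← Complex.mul_conj]
      congr 1
      rw [map_sub, map_one, hconj]
    have hr0 : Complex.normSq (1-Q) ≠ 0 := by
      simpa [Complex.normSq_eq_zero] using h1Q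
    have hvN : v * ((Complex.normSq (1-Q) : ℝ) : ℂ) = N * (1-Q⁻¹) := by
      rw [← hr, claim1]
      field_simp
    have hvre : v.re = 0 := by
      have h := congrArg Complex.re hvN
      rw [hre] at h
      simp [Complex.mul_re] at h
      rcases h with h | h
      · exact h
      · exact absurd h h1Q
    have hsplit : v.re = w₁.re - 2*z*w₂.re + w₃.re := by
      rw [hvdef]
      simp [Complex.add_re, Complex.sub_re, Complex.mul_re]
    rw [hsplit] at hvre
    linarith
  -- base cases
  have base1 : (a 1).im * s = 1 := by
    have e1 : (1:ℤ) = 2*1-1 := by ring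
    rw [e1, haodd 1, him]
    have hone : ((1 - Q^(2:ℤ)) / (1 - Q)) * ((1 - Q^(1:ℤ)) / (1 - Q)) - Q^(1:ℤ) = 1 := by
      rw [hQ2, zpow_one]
      field_simp
      ring
    rw [hone]
    simp
  have base2 : (a 2).im * s = 2*z := by
    have e1 : (2:ℤ) = 2*1 := by ring
    rw [e1, haeven 1, him]
    have hw : ((1 - Q^(2:ℤ)) / (1 - Q)) * ((1 - Q^(1:ℤ)) / (1 - Q)) = 1 + Q := by
      rw [hQ2, zpow_one]
      field_simp
      ring
    rw [hw]
    have hre : Q.re = 2*z - 1 := by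
      have h1 : Q + (starRingEnd ℂ) Q = ((2*Q.re : ℝ) : ℂ) := by
        rw [Complex.add_conj]
      rw [hconj, hzc] at h1
      have h2 := congrArg Complex.re h1
      push_cast at h2
      simp at h2
      linarith
    simp [Complex.add_re, hre]
  -- main induction
  have key : ∀ n : ℕ, (a ((n:ℤ)+1)).im * s = U n z ∧ (a ((n:ℤ)+2)).im * s = U (n+1) z := by
    intro n
    induction n with
    | zero =>
      constructor
      · simpa using base1.trans (hU0 z).symm
      · have e : ((0:ℕ):ℤ) + 2 = 2 := by norm_num
        rw [e, base2, hU1]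
    | succ n ih =>
      constructor
      · have e : ((n+1:ℕ):ℤ) + 1 = (n:ℤ) + 2 := by push_cast; ring
        rw [e]
        exact ih.2
      · have goalidx : ((n+1:ℕ):ℤ) + 2 = (n:ℤ) + 3 := by push_cast; ring
        rw [goalidx]
        rcases Nat.even_or_odd n with he | ho
        · obtain ⟨k, hk⟩ := he
          have hodd : Odd (n+1) := ⟨k, by omega⟩
          have hU := hUodd (n+1) (by omega) hodd z
          simp only [Nat.add_sub_cancel] at hU
          have eA : (n:ℤ) + 3 = 2*((k:ℤ)+1)+1 := by omega
          have eB : (n:ℤ) + 2 = 2*((k:ℤ)+1) := by omega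
          have eC : (n:ℤ) + 1 = 2*((k:ℤ)+1)-1 := by omega
          have hA := lemA ((k:ℤ)+1)
          rw [← eA, ← eC, ← eB] at hA
          rw [hA]
          have him2 : (2 * a ((n:ℤ)+2) - a ((n:ℤ)+1)).im
              = 2 * (a ((n:ℤ)+2)).im - (a ((n:ℤ)+1)).im := by
            simp
          rw [him2, hU]
          linear_combination (2:ℝ) * ih.2 - ih.1
        · obtain ⟨k, hk⟩ := ho
          have heven : Even (n+1) := ⟨k+1, by omega⟩
          have hU := hUeven (n+1) (by omega) heven z
          simp only [Nat.add_sub_cancel] at hU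
          have eA : (n:ℤ) + 3 = 2*((k:ℤ)+1)+2 := by omega
          have eB : (n:ℤ) + 2 = 2*((k:ℤ)+1)+1 := by omega
          have eC : (n:ℤ) + 1 = 2*((k:ℤ)+1) := by omega
          have hB := lemB ((k:ℤ)+1)
          rw [← eA, ← eB, ← eC] at hB
          rw [hB, hU, ih.1, ih.2]
  intro n
  exact (key n).1
end

section
/- With ℐ_n(z) = Im([ni]_q)/(q^{-1/2}) and z = q/(q²−q+1), the sequence ℐ_n satisfies the mixed recurrence ℐ_{n+1} = 2z·ℐ_n − ℐ_{n−1} for n odd and ℐ_{n+1} = 2·ℐ_n − ℐ_{n−1} for n even, with ℐ_0 = 0, ℐ_1 = 1. -/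
/-- With `ℐ_n = Im([n i]_q) · √q` and `z = q/(q²-q+1)` for `q ∈ (0,1)`, the sequence
`ℐ_n` satisfies the mixed recurrence `ℐ_{n+1} = 2z ℐ_n - ℐ_{n-1}` for `n` odd and
`ℐ_{n+1} = 2 ℐ_n - ℐ_{n-1}` for `n` even, with `ℐ_0 = 0`, `ℐ_1 = 1`. -/
theorem im_qGaussian_recurrence (q : ℝ) (hq0 : 0 < q) (hq1 : q < 1) (Q : ℂ)
    (hQ : Q = (2 * Complex.I * (Real.sqrt q : ℂ) * ((q : ℂ) - 1) -
        ((q : ℂ) ^ 2 - 3 * (q : ℂ) + 1)) / ((q : ℂ) ^ 2 - (q : ℂ) + 1))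
    (a : ℤ → ℂ) (ha0 : a 0 = 0)
    (ha1 : a 1 = Complex.I * ((Real.sqrt q : ℂ))⁻¹)
    (ham1 : a (-1) = -(Complex.I * ((Real.sqrt q : ℂ))⁻¹))
    (ha2 : a 2 = (Q + 1) * (Complex.I * ((Real.sqrt q : ℂ))⁻¹))
    (harec : ∀ n : ℤ, a (n + 2) = (Q + 1) * a n - Q * a (n - 2)) :
    (a 0).im * Real.sqrt q = 0 ∧ (a 1).im * Real.sqrt q = 1 ∧
    ∀ n : ℤ,
      (Odd n → (a (n + 1)).im * Real.sqrt q =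
        2 * (q / (q ^ 2 - q + 1)) * ((a n).im * Real.sqrt q) -
          (a (n - 1)).im * Real.sqrt q) ∧
      (Even n → (a (n + 1)).im * Real.sqrt q =
        2 * ((a n).im * Real.sqrt q) - (a (n - 1)).im * Real.sqrt q) := by
  have hsqpos : 0 < Real.sqrt q := Real.sqrt_pos.mpr hq0
  set s : ℂ := (Real.sqrt q : ℂ) with hs
  have hs0 : s ≠ 0 := by
    rw [hs]
    exact_mod_cast ne_of_gt hsqpos
  have hsq2 : s ^ 2 = (q : ℂ) := by
    rw [hs]; norm_cast; exact Real.sq_sqrt hq0.le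
  have hdenR : (0:ℝ) < q^2 - q + 1 := by nlinarith
  have hden : ((q:ℂ)^2 - (q:ℂ) + 1) ≠ 0 := by
    have h : ((q:ℂ)^2 - (q:ℂ) + 1) = ((q^2 - q + 1 : ℝ) : ℂ) := by push_cast; ring
    rw [h]
    exact_mod_cast ne_of_gt hdenR
  have hq1c : (q:ℂ) - 1 ≠ 0 := by
    intro h
    have h2 : (q:ℂ) = 1 := by linear_combination h
    have h3 : q = 1 := by exact_mod_cast h2
    linarith
  obtain ⟨D, hD⟩ : ∃ D : ℂ, D = ((q:ℂ) - 1)⁻¹ := ⟨_, rfl⟩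
  have hQden : Q * ((q:ℂ)^2 - (q:ℂ) + 1)
      = 2*Complex.I*s*((q:ℂ)-1) - ((q:ℂ)^2 - 3*(q:ℂ) + 1) := by
    rw [hQ]; exact div_mul_cancel₀ _ hden
  have hQim : Q.im * (q^2 - q + 1) = 2 * Real.sqrt q * (q - 1) := by
    have hc1 : Q * ((q:ℂ)^2 - (q:ℂ) + 1) = Q * ((q^2 - q + 1 : ℝ) : ℂ) := by push_cast; ring
    have hc2 : 2*Complex.I*s*((q:ℂ)-1) - ((q:ℂ)^2 - 3*(q:ℂ) + 1)
        = ((-(q^2 - 3*q + 1) : ℝ) : ℂ) + ((2 * Real.sqrt q * (q-1) : ℝ) : ℂ) * Complex.I := by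
      rw [hs]; push_cast; ring
    have h := hQden
    rw [hc1, hc2] at h
    have h2 := congrArg Complex.im h
    simp only [Complex.mul_im, Complex.add_im, Complex.ofReal_re, Complex.ofReal_im,
      Complex.I_re, Complex.I_im, Complex.mul_re] at h2
    linarith
  have hQimne : Q.im ≠ 0 := by
    intro h
    rw [h, zero_mul] at hQim
    nlinarith [hsqpos]
  have hQ0 : Q ≠ 0 := by
    intro h; exact hQimne (by rw [h]; simp)
  have hQ1 : Q + 1 ≠ 0 := by
    intro h
    have h2 : Q = -1 := by linear_combination h
    exact hQimne (by rw [h2]; simp)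
  have K1 : (Q+1)^2 * ((q:ℂ)^2 - (q:ℂ) + 1) = 4*(q:ℂ)*Q := by
    have h2 : (Q * ((q:ℂ)^2 - (q:ℂ) + 1) + ((q:ℂ)^2 - (q:ℂ) + 1))^2
        = 4*(q:ℂ)*(Q * ((q:ℂ)^2 - (q:ℂ) + 1)) := by
      rw [hQden]
      linear_combination (4*Complex.I^2 - 8*Complex.I^2*(q:ℂ) + 4*Complex.I^2*(q:ℂ)^2) * hsq2
        + (4*(q:ℂ) - 8*(q:ℂ)^2 + 4*(q:ℂ)^3) * Complex.I_sq
    have h3 : ((Q+1)^2 * ((q:ℂ)^2 - (q:ℂ) + 1)) * ((q:ℂ)^2 - (q:ℂ) + 1)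
        = (4*(q:ℂ)*Q) * ((q:ℂ)^2 - (q:ℂ) + 1) := by linear_combination h2
    exact mul_right_cancel₀ hden h3
  -- the two key one-step multipliers identities
  have C0 : (Complex.I*((q:ℂ)-1) + s) * (Q*((q:ℂ)^2 - (q:ℂ) + 1) + ((q:ℂ)^2 - (q:ℂ) + 1))
      = 2*s*(Q*((q:ℂ)^2 - (q:ℂ) + 1)) := by
    rw [hQden]
    linear_combination (2*Complex.I - 2*Complex.I*(q:ℂ)) * hsq2
      + (2*s - 4*s*(q:ℂ) + 2*s*(q:ℂ)^2) * Complex.I_sq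
  have C0' : (Complex.I*((q:ℂ)-1) + s) * (Q+1) = 2*s*Q := by
    apply mul_right_cancel₀ hden
    linear_combination C0
  have C1 : (Q*((q:ℂ)^2 - (q:ℂ) + 1) + ((q:ℂ)^2 - (q:ℂ) + 1)) * (s - Complex.I*((q:ℂ)-1))
      = 2*s*((q:ℂ)^2 - (q:ℂ) + 1) := by
    rw [hQden]
    linear_combination (-2*Complex.I + 2*Complex.I*(q:ℂ)) * hsq2
      + (-2*s + 4*s*(q:ℂ) - 2*s*(q:ℂ)^2) * Complex.I_sq
  have C1' : (Q+1) * (s - Complex.I*((q:ℂ)-1)) = 2*s := by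
    apply mul_right_cancel₀ hden
    linear_combination C1
  set l : ℤ → ℂ := fun m => if m % 2 = 0 then 2*Q/(Q+1) else (Q+1)/2 with hl
  have hlprod : ∀ n : ℤ, l (n+1) * l n = Q := by
    intro n
    by_cases h : n % 2 = 0
    · have h1 : ¬((n+1) % 2 = 0) := by omega
      simp only [hl, if_pos h, if_neg h1]
      field_simp
    · have h1 : (n+1) % 2 = 0 := by omega
      simp only [hl, if_pos h1, if_neg h]
      field_simp
  have hlne : ∀ n : ℤ, l n ≠ 0 := by
    intro n
    by_cases h : n % 2 = 0
    · simp only [hl, if_pos h]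
      exact div_ne_zero (mul_ne_zero two_ne_zero hQ0) hQ1
    · simp only [hl, if_neg h]
      exact div_ne_zero hQ1 two_ne_zero
  have hb : ∀ n : ℤ, a (n+2) + D = (Q+1)*(a n + D) - Q*(a (n-2) + D) := by
    intro n
    linear_combination harec n
  -- base cases
  have B0 : a 1 + D = (2*Q/(Q+1)) * (a 0 + D) := by
    rw [ha0, ha1, hD]
    apply mul_right_cancel₀ (mul_ne_zero (mul_ne_zero hs0 hq1c) hQ1)
    have u1 : s * s⁻¹ = 1 := mul_inv_cancel₀ hs0
    have u2 : ((q:ℂ)-1) * ((q:ℂ)-1)⁻¹ = 1 := mul_inv_cancel₀ hq1c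
    have u3 : (Q+1) * (Q+1)⁻¹ = 1 := mul_inv_cancel₀ hQ1
    linear_combination C0' + (Complex.I*((q:ℂ)-1)*(Q+1)) * u1 + (s*(Q+1)) * u2
      - (2*Q*s*((q:ℂ)-1)*((q:ℂ)-1)⁻¹) * u3 - (2*Q*s) * u2
  have B1 : a 2 + D = ((Q+1)/2) * (a 1 + D) := by
    rw [ha2, ha1, hD]
    apply mul_right_cancel₀ (mul_ne_zero hs0 hq1c)
    have u1 : s * s⁻¹ = 1 := mul_inv_cancel₀ hs0
    have u2 : ((q:ℂ)-1) * ((q:ℂ)-1)⁻¹ = 1 := mul_inv_cancel₀ hq1c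
    linear_combination (-1/2 : ℂ) * C1' + ((Q+1)*Complex.I*((q:ℂ)-1)/2) * u1
      + (s - (Q+1)*s/2) * u2
  have Bm1 : a 0 + D = ((Q+1)/2) * (a (-1) + D) := by
    rw [ha0, ham1, hD]
    apply mul_right_cancel₀ (mul_ne_zero hs0 hq1c)
    have u1 : s * s⁻¹ = 1 := mul_inv_cancel₀ hs0
    have u2 : ((q:ℂ)-1) * ((q:ℂ)-1)⁻¹ = 1 := mul_inv_cancel₀ hq1c
    linear_combination (-1/2 : ℂ) * C1' + ((Q+1)*Complex.I*((q:ℂ)-1)/2) * u1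
      + (s - (Q+1)*s/2) * u2
  have hl0 : l 0 = 2*Q/(Q+1) := by simp [hl]
  have hl1 : l 1 = (Q+1)/2 := by norm_num [hl]
  have hlm1 : l (-1) = (Q+1)/2 := by norm_num [hl]
  -- forward and backward steps
  have fwd : ∀ n : ℤ, (a (n-1+1) + D = l (n-1) * (a (n-1) + D)) →
      (a (n+1) + D = l n * (a n + D)) →
      (a (n+1+1) + D = l (n+1) * (a (n+1) + D)) →
      (a (n+2+1) + D = l (n+2) * (a (n+2) + D)) := by
    intro n h1 h2 h3
    rw [show n-1+1 = n from by ring] at h1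
    rw [show n+1+1 = n+2 from by ring] at h3
    rw [show n+2+1 = n+3 from by ring]
    have hb1 := hb (n+1)
    rw [show n+1+2 = n+3 from by ring, show n+1-2 = n-1 from by ring] at hb1
    have hp0 := hlprod (n-1)
    rw [show n-1+1 = n from by ring] at hp0
    have hQn : a (n+1) + D = Q * (a (n-1) + D) := by
      rw [h2, h1]
      linear_combination (a (n-1) + D) * hp0
    have hp1 := hlprod (n+1)
    rw [show n+1+1 = n+2 from by ring] at hp1
    rw [hb1, h3]
    linear_combination hQn - (a (n+1) + D) * hp1
  have bwd : ∀ n : ℤ, (a (n+1+1) + D = l (n+1) * (a (n+1) + D)) →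
      (a (n+2+1) + D = l (n+2) * (a (n+2) + D)) →
      (a (n+3+1) + D = l (n+3) * (a (n+3) + D)) →
      (a (n+1) + D = l n * (a n + D)) := by
    intro n h1 h2 h3
    rw [show n+1+1 = n+2 from by ring] at h1
    rw [show n+2+1 = n+3 from by ring] at h2
    rw [show n+3+1 = n+4 from by ring] at h3
    have hb2 := hb (n+2)
    rw [show n+2+2 = n+4 from by ring, show n+2-2 = n from by ring] at hb2
    have hp2 := hlprod (n+2)
    rw [show n+2+1 = n+3 from by ring] at hp2
    have hQn : Q * (a n + D) = a (n+2) + D := by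
      linear_combination hb2 - h3 - l (n+3) * h2 - (a (n+2) + D) * hp2
    have hp0 := hlprod n
    have hgoal : l (n+1) * (a (n+1) + D) = l (n+1) * (l n * (a n + D)) := by
      linear_combination (-1 : ℂ) * h1 - hQn - (a n + D) * hp0
    exact mul_left_cancel₀ (hlne (n+1)) hgoal
  -- main induction
  have main : ∀ n : ℤ, (a (n-1+1) + D = l (n-1) * (a (n-1) + D)) ∧
      (a (n+1) + D = l n * (a n + D)) ∧ (a (n+1+1) + D = l (n+1) * (a (n+1) + D)) := by
    intro n
    induction n using Int.induction_on with
    | zero =>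
      refine ⟨?_, ?_, ?_⟩
      · rw [show (0:ℤ)-1 = -1 from by norm_num]
        rw [show (-1:ℤ)+1 = 0 from by norm_num, hlm1]
        exact Bm1
      · rw [show (0:ℤ)+1 = 1 from by norm_num, hl0]
        exact B0
      · rw [show (0:ℤ)+1 = 1 from by norm_num]
        rw [show (1:ℤ)+1 = 2 from by norm_num, hl1]
        exact B1
    | succ i ih =>
      refine ⟨?_, ih.2.2, ?_⟩
      · rw [show (i:ℤ)+1-1 = (i:ℤ) from by ring]
        exact ih.2.1
      · rw [show (i:ℤ)+1+1 = (i:ℤ)+2 from by ring]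
        exact fwd (i:ℤ) ih.1 ih.2.1 ih.2.2
    | pred i ih =>
      refine ⟨?_, ih.1, ?_⟩
      · rw [show -(i:ℤ)-1-1 = -(i:ℤ)-2 from by ring]
        refine bwd (-(i:ℤ)-2) ?_ ?_ ?_
        · rw [show -(i:ℤ)-2+1 = -(i:ℤ)-1 from by ring]
          exact ih.1
        · rw [show -(i:ℤ)-2+2 = -(i:ℤ) from by ring]
          exact ih.2.1
        · rw [show -(i:ℤ)-2+3 = -(i:ℤ)+1 from by ring]
          exact ih.2.2
      · rw [show -(i:ℤ)-1+1 = -(i:ℤ) from by ring]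
        exact ih.2.1
  have key : ∀ n : ℤ, a (n+1) + D = l n * (a n + D) := fun n => (main n).2.1
  have hDim : D.im = 0 := by
    rw [hD]
    simp [Complex.inv_im]
  refine ⟨?_, ?_, ?_⟩
  · rw [ha0]; simp
  · rw [ha1, hs, ← Complex.ofReal_inv]
    simp only [Complex.mul_im, Complex.I_re, Complex.I_im, Complex.ofReal_re,
      Complex.ofReal_im, zero_mul, one_mul, zero_add, mul_zero]
    exact inv_mul_cancel₀ (ne_of_gt hsqpos)
  · intro n
    constructor
    · -- odd case
      intro hodd
      have hnE : ¬(n % 2 = 0) := by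
        rcases hodd with ⟨k, hk⟩; omega
      have h2 := key n
      simp only [hl, if_neg hnE] at h2
      have h1 := key (n-1)
      rw [show n-1+1 = n from by ring] at h1
      have hE1 : (n-1) % 2 = 0 := by omega
      simp only [hl, if_pos hE1] at h1
      have hc : (a (n+1) + D) + (a (n-1) + D) = ((2*(q/(q^2-q+1)) : ℝ) : ℂ) * (a n + D) := by
        have hcast : ((2*(q/(q^2-q+1)) : ℝ) : ℂ) = 2*(q:ℂ)/((q:ℂ)^2-(q:ℂ)+1) := by
          push_cast; ring
        have hmain : 2*(q:ℂ)/((q:ℂ)^2-(q:ℂ)+1) * (2*Q/(Q+1)) = Q + 1 := by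
          rw [div_mul_div_comm, div_eq_iff (mul_ne_zero hden hQ1)]
          linear_combination -K1
        have e1 : (Q+1)/2 * (2*Q/(Q+1) * (a (n-1) + D)) = Q * (a (n-1) + D) := by
          field_simp
        have e2 : 2*(q:ℂ)/((q:ℂ)^2-(q:ℂ)+1) * (2*Q/(Q+1) * (a (n-1) + D)) = (Q+1) * (a (n-1) + D) := by
          rw [show 2*(q:ℂ)/((q:ℂ)^2-(q:ℂ)+1) * (2*Q/(Q+1) * (a (n-1) + D))
              = (2*(q:ℂ)/((q:ℂ)^2-(q:ℂ)+1) * (2*Q/(Q+1))) * (a (n-1) + D) from by ring, hmain]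
        rw [h2, h1, hcast, e1, e2]
        ring
      have him := congrArg Complex.im hc
      simp only [Complex.add_im, hDim, add_zero, Complex.im_ofReal_mul] at him
      linear_combination (Real.sqrt q) * him
    · -- even case
      intro heven
      have hE : n % 2 = 0 := by
        rcases heven with ⟨k, hk⟩; omega
      have h2 := key n
      simp only [hl, if_pos hE] at h2
      have h1 := key (n-1)
      rw [show n-1+1 = n from by ring] at h1
      have hO1 : ¬((n-1) % 2 = 0) := by omega
      simp only [hl, if_neg hO1] at h1
      have hc : (a (n+1) + D) + (a (n-1) + D) = ((2 : ℝ) : ℂ) * (a n + D) := by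
        have e1 : 2*Q/(Q+1) * ((Q+1)/2 * (a (n-1) + D)) = Q * (a (n-1) + D) := by
          field_simp
        rw [h2, h1, e1]
        push_cast
        ring
      have him := congrArg Complex.im hc
      simp only [Complex.add_im, hDim, add_zero, Complex.im_ofReal_mul] at him
      linear_combination (Real.sqrt q) * him
end
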